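/- The function g is strictly increasing on the interval (20/21, 1). -/

import Mathlib

/-- The lower-bound function `g` of Theorem II.1 (base-2 logarithms; since
`Real.logb 2 0 = 0`, terms of the form `0 · log₂ 0` vanish as intended). -/
noncomputable def g (r : ℝ) : ℝ :=
  (1/64) * (2*(1-r) * Real.logb 2 (1280*(1-r)/(43*r+20))
    + (63*r/10) * Real.logb 2 (64*r/(43*r+20))
    + 18*(1-r) * Real.logb 2 (640*(1-r)/(11*r+20))
    + (279*r/10) * Real.logb 2 (32*r/(11*r+20))
    + 6*(1-r) * Real.logb 2 (1280*(1-r)/(r+60))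
    + (61*r/10) * Real.logb 2 (64*r/(r+60))
    + 20*(1-r) * Real.logb 2 (64*(1-r)/(4-r))
    + 15*r * Real.logb 2 (16*r/(5*(4-r)))
    + 18*(1-r) * Real.logb 2 (640*(1-r)/(60-31*r))
    + (87*r/10) * Real.logb 2 (32*r/(60-31*r)))

/-- Natural-log closed form: `g = F / log 2`. -/
noncomputable def F (r : ℝ) : ℝ :=
  (1-r) * Real.log (1-r) + r * Real.log r
    + (436*Real.log 2 + 44*Real.log 5)/64
    - (593*Real.log 2 + 295*Real.log 5)/320 * r
    - (1/640) * ((43*r+20) * Real.log (43*r+20) + 9*((11*r+20) * Real.log (11*r+20))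
        + (r+60) * Real.log (r+60) + 50*((4-r) * Real.log (4-r))
        + 3*((60-31*r) * Real.log (60-31*r)))

/-- Derivative of `F`. -/
noncomputable def F' (r : ℝ) : ℝ :=
  Real.log r - Real.log (1-r) - (593*Real.log 2 + 295*Real.log 5)/320
    - (1/640) * (43*Real.log (43*r+20) + 99*Real.log (11*r+20)
        + Real.log (r+60) - 50*Real.log (4-r) - 93*Real.log (60-31*r))

lemma log_diff_le {x y : ℝ} (hx : 0 < x) (hy : 0 < y) :
    Real.log x - Real.log y ≤ (x - y) / y := by
  rw [← Real.log_div hx.ne' hy.ne']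
  have h := Real.log_le_sub_one_of_pos (div_pos hx hy)
  have h2 : x / y - 1 = (x - y)/y := by field_simp
  linarith

lemma hd_mul_log {u : ℝ → ℝ} {a r : ℝ} (hu : HasDerivAt u a r) (h : 0 < u r) :
    HasDerivAt (fun x => u x * Real.log (u x)) (a * Real.log (u r) + a) r := by
  have h2 := hu.mul (hu.log h.ne')
  rw [mul_div_cancel₀ a h.ne'] at h2
  exact h2

lemma hasDerivAt_F {r : ℝ} (h0 : 0 < r) (h1 : r < 1) : HasDerivAt F (F' r) r := by
  have hs : (0:ℝ) < 1 - r := by linarith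
  have hu1 : (0:ℝ) < 43*r+20 := by linarith
  have hu2 : (0:ℝ) < 11*r+20 := by linarith
  have hu3 : (0:ℝ) < r+60 := by linarith
  have hu4 : (0:ℝ) < 4-r := by linarith
  have hu5 : (0:ℝ) < 60-31*r := by linarith
  have d1 : HasDerivAt (fun x : ℝ => (1-x) * Real.log (1-x))
      ((-1) * Real.log (1-r) + (-1)) r :=
    hd_mul_log ((hasDerivAt_id r).const_sub 1) hs
  have d2 : HasDerivAt (fun x : ℝ => x * Real.log x) (1 * Real.log r + 1) r :=
    hd_mul_log (hasDerivAt_id r) h0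
  have l1 : HasDerivAt (fun x : ℝ => 43*x+20) 43 r := by
    simpa using ((hasDerivAt_id r).const_mul (43:ℝ)).add_const 20
  have l2 : HasDerivAt (fun x : ℝ => 11*x+20) 11 r := by
    simpa using ((hasDerivAt_id r).const_mul (11:ℝ)).add_const 20
  have l3 : HasDerivAt (fun x : ℝ => x+60) 1 r := (hasDerivAt_id r).add_const 60
  have l4 : HasDerivAt (fun x : ℝ => 4-x) (-1) r := (hasDerivAt_id r).const_sub 4
  have l5 : HasDerivAt (fun x : ℝ => 60-31*x) (-31) r := by
    simpa using ((hasDerivAt_id r).const_mul (31:ℝ)).const_sub 60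
  have dA := hd_mul_log l1 hu1
  have dB := (hd_mul_log l2 hu2).const_mul (9:ℝ)
  have dC := hd_mul_log l3 hu3
  have dD := (hd_mul_log l4 hu4).const_mul (50:ℝ)
  have dE := (hd_mul_log l5 hu5).const_mul (3:ℝ)
  have dlin : HasDerivAt (fun x : ℝ => (593*Real.log 2 + 295*Real.log 5)/320 * x)
      ((593*Real.log 2 + 295*Real.log 5)/320) r := by
    simpa using (hasDerivAt_id r).const_mul ((593*Real.log 2 + 295*Real.log 5)/320)
  have dbr := ((((dA.add dB).add dC).add dD).add dE).const_mul (1/640 : ℝ)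
  have hbig := (((d1.add d2).add_const ((436*Real.log 2 + 44*Real.log 5)/64)).sub dlin).sub dbr
  have e : F' r = ((-1) * Real.log (1-r) + (-1) + (1 * Real.log r + 1)
      - (593*Real.log 2 + 295*Real.log 5)/320
      - (1/640) * ((43 * Real.log (43*r+20) + 43) + 9*(11 * Real.log (11*r+20) + 11)
          + (1 * Real.log (r+60) + 1) + 50*((-1) * Real.log (4-r) + (-1))
          + 3*((-31) * Real.log (60-31*r) + (-31)))) := by
    simp only [F']; ring
  rw [e]
  exact hbig

lemma Fp0 : Real.log (20/21) - Real.log (1/21)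
    - (593*Real.log 2 + 295*Real.log 5)/320
    - (1/640) * (43*Real.log (1280/21) + 99*Real.log (640/21)
        + Real.log (1280/21) - 50*Real.log (64/21) - 93*Real.log (640/21)) = 0 := by
  have l1 : Real.log ((1280:ℝ)/21) = 8*Real.log 2 + Real.log 5 - Real.log 21 := by
    rw [show (1280:ℝ)/21 = 2^8*5/21 by norm_num,
      Real.log_div (by norm_num) (by norm_num),
      Real.log_mul (by norm_num) (by norm_num), Real.log_pow]
    push_cast; ring
  have l2 : Real.log ((640:ℝ)/21) = 7*Real.log 2 + Real.log 5 - Real.log 21 := by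
    rw [show (640:ℝ)/21 = 2^7*5/21 by norm_num,
      Real.log_div (by norm_num) (by norm_num),
      Real.log_mul (by norm_num) (by norm_num), Real.log_pow]
    push_cast; ring
  have l3 : Real.log ((64:ℝ)/21) = 6*Real.log 2 - Real.log 21 := by
    rw [show (64:ℝ)/21 = 2^6/21 by norm_num,
      Real.log_div (by norm_num) (by norm_num), Real.log_pow]
    push_cast; ring
  have l4 : Real.log ((20:ℝ)/21) = 2*Real.log 2 + Real.log 5 - Real.log 21 := by
    rw [show (20:ℝ)/21 = 2^2*5/21 by norm_num,
      Real.log_div (by norm_num) (by norm_num),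
      Real.log_mul (by norm_num) (by norm_num), Real.log_pow]
    push_cast; ring
  have l5 : Real.log ((1:ℝ)/21) = - Real.log 21 := by
    rw [show (1:ℝ)/21 = 21⁻¹ by norm_num, Real.log_inv]
  rw [l1, l2, l3, l4, l5]; ring

lemma F'_pos {r : ℝ} (h0 : 20/21 < r) (h1 : r < 1) : 0 < F' r := by
  have hr : (0:ℝ) < r := by linarith
  have hs : (0:ℝ) < 1 - r := by linarith
  have hu1 : (0:ℝ) < 43*r+20 := by linarith
  have hu2 : (0:ℝ) < 11*r+20 := by linarith
  have hu3 : (0:ℝ) < r+60 := by linarith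
  have hu4 : (0:ℝ) < 4-r := by linarith
  have hu5 : (0:ℝ) < 60-31*r := by linarith
  have b1 : Real.log r - Real.log (20/21) ≥ r - 20/21 := by
    have h := log_diff_le (show (0:ℝ) < 20/21 by norm_num) hr
    have h2 : (20/21 - r)/r ≤ -(r - 20/21) := by
      rw [div_le_iff₀ hr]
      nlinarith
    linarith
  have b2 : Real.log (1-r) - Real.log (1/21) ≤ 21*((1-r) - 1/21) := by
    have h := log_diff_le hs (show (0:ℝ) < 1/21 by norm_num)
    have h2 : ((1-r) - 1/21)/(1/21) = 21*((1-r) - 1/21) := by ring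
    linarith
  have b3 : Real.log (43*r+20) - Real.log (1280/21) ≤ (21/1280)*(43*r+20 - 1280/21) := by
    have h := log_diff_le hu1 (show (0:ℝ) < 1280/21 by norm_num)
    have h2 : (43*r+20 - 1280/21)/(1280/21) = (21/1280)*(43*r+20 - 1280/21) := by ring
    linarith
  have b4 : Real.log (11*r+20) - Real.log (640/21) ≤ (21/640)*(11*r+20 - 640/21) := by
    have h := log_diff_le hu2 (show (0:ℝ) < 640/21 by norm_num)
    have h2 : (11*r+20 - 640/21)/(640/21) = (21/640)*(11*r+20 - 640/21) := by ring
    linarith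
  have b5 : Real.log (r+60) - Real.log (1280/21) ≤ (21/1280)*(r+60 - 1280/21) := by
    have h := log_diff_le hu3 (show (0:ℝ) < 1280/21 by norm_num)
    have h2 : (r+60 - 1280/21)/(1280/21) = (21/1280)*(r+60 - 1280/21) := by ring
    linarith
  have b6 : Real.log (64/21) - Real.log (4-r) ≤ (r - 20/21)/3 := by
    have h := log_diff_le (show (0:ℝ) < 64/21 by norm_num) hu4
    have h2 : (64/21 - (4-r))/(4-r) ≤ (r - 20/21)/3 := by
      rw [div_le_div_iff₀ hu4 (by norm_num)]
      nlinarith [mul_nonneg (show (0:ℝ) ≤ r - 20/21 by linarith) (show (0:ℝ) ≤ 1 - r by linarith)]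
    linarith
  have b7 : Real.log (640/21) - Real.log (60-31*r) ≤ 31*(r - 20/21)/29 := by
    have h := log_diff_le (show (0:ℝ) < 640/21 by norm_num) hu5
    have h2 : (640/21 - (60-31*r))/(60-31*r) ≤ 31*(r - 20/21)/29 := by
      rw [div_le_div_iff₀ hu5 (by norm_num)]
      nlinarith [mul_nonneg (show (0:ℝ) ≤ r - 20/21 by linarith) (show (0:ℝ) ≤ 1 - r by linarith)]
    linarith
  have h00 := Fp0
  simp only [F']
  linarith [b1, b2, b3, b4, b5, b6, b7, h00]

lemma g_eq {r : ℝ} (h0 : 0 < r) (h1 : r < 1) : g r = F r / Real.log 2 := by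
  have hs : (0:ℝ) < 1 - r := by linarith
  have hu1 : (0:ℝ) < 43*r+20 := by linarith
  have hu2 : (0:ℝ) < 11*r+20 := by linarith
  have hu3 : (0:ℝ) < r+60 := by linarith
  have hu4 : (0:ℝ) < 4-r := by linarith
  have hu5 : (0:ℝ) < 60-31*r := by linarith
  have hlog2 : (0:ℝ) < Real.log 2 := Real.log_pos (by norm_num)
  have h1280 : Real.log (1280:ℝ) = 8*Real.log 2 + Real.log 5 := by
    rw [show (1280:ℝ) = 2^8*5 by norm_num,
      Real.log_mul (by norm_num) (by norm_num), Real.log_pow]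
    push_cast; ring
  have h640 : Real.log (640:ℝ) = 7*Real.log 2 + Real.log 5 := by
    rw [show (640:ℝ) = 2^7*5 by norm_num,
      Real.log_mul (by norm_num) (by norm_num), Real.log_pow]
    push_cast; ring
  have h64 : Real.log (64:ℝ) = 6*Real.log 2 := by
    rw [show (64:ℝ) = 2^6 by norm_num, Real.log_pow]
    push_cast; ring
  have h32 : Real.log (32:ℝ) = 5*Real.log 2 := by
    rw [show (32:ℝ) = 2^5 by norm_num, Real.log_pow]
    push_cast; ring
  have h16 : Real.log (16:ℝ) = 4*Real.log 2 := by
    rw [show (16:ℝ) = 2^4 by norm_num, Real.log_pow]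
    push_cast; ring
  have e1 : Real.log (1280*(1-r)/(43*r+20))
      = 8*Real.log 2 + Real.log 5 + Real.log (1-r) - Real.log (43*r+20) := by
    rw [Real.log_div (by positivity) hu1.ne', Real.log_mul (by norm_num) hs.ne', h1280]
  have e2 : Real.log (64*r/(43*r+20))
      = 6*Real.log 2 + Real.log r - Real.log (43*r+20) := by
    rw [Real.log_div (by positivity) hu1.ne', Real.log_mul (by norm_num) h0.ne', h64]
  have e3 : Real.log (640*(1-r)/(11*r+20))
      = 7*Real.log 2 + Real.log 5 + Real.log (1-r) - Real.log (11*r+20) := by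
    rw [Real.log_div (by positivity) hu2.ne', Real.log_mul (by norm_num) hs.ne', h640]
  have e4 : Real.log (32*r/(11*r+20))
      = 5*Real.log 2 + Real.log r - Real.log (11*r+20) := by
    rw [Real.log_div (by positivity) hu2.ne', Real.log_mul (by norm_num) h0.ne', h32]
  have e5 : Real.log (1280*(1-r)/(r+60))
      = 8*Real.log 2 + Real.log 5 + Real.log (1-r) - Real.log (r+60) := by
    rw [Real.log_div (by positivity) hu3.ne', Real.log_mul (by norm_num) hs.ne', h1280]
  have e6 : Real.log (64*r/(r+60))
      = 6*Real.log 2 + Real.log r - Real.log (r+60) := by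
    rw [Real.log_div (by positivity) hu3.ne', Real.log_mul (by norm_num) h0.ne', h64]
  have e7 : Real.log (64*(1-r)/(4-r))
      = 6*Real.log 2 + Real.log (1-r) - Real.log (4-r) := by
    rw [Real.log_div (by positivity) hu4.ne', Real.log_mul (by norm_num) hs.ne', h64]
  have e8 : Real.log (16*r/(5*(4-r)))
      = 4*Real.log 2 + Real.log r - (Real.log 5 + Real.log (4-r)) := by
    rw [Real.log_div (by positivity) (by positivity), Real.log_mul (by norm_num) h0.ne',
      Real.log_mul (by norm_num) hu4.ne', h16]
  have e9 : Real.log (640*(1-r)/(60-31*r))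
      = 7*Real.log 2 + Real.log 5 + Real.log (1-r) - Real.log (60-31*r) := by
    rw [Real.log_div (by positivity) hu5.ne', Real.log_mul (by norm_num) hs.ne', h640]
  have e10 : Real.log (32*r/(60-31*r))
      = 5*Real.log 2 + Real.log r - Real.log (60-31*r) := by
    rw [Real.log_div (by positivity) hu5.ne', Real.log_mul (by norm_num) h0.ne', h32]
  simp only [g, F, Real.logb, e1, e2, e3, e4, e5, e6, e7, e8, e9, e10]
  field_simp
  ring

/-- `g` is strictly increasing on `(20/21, 1)`. -/
theorem g_strictMonoOn : StrictMonoOn g (Set.Ioo ((20 : ℝ) / 21) 1) := by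
  have hlog2 : (0:ℝ) < Real.log 2 := Real.log_pos (by norm_num)
  have hmono : StrictMonoOn F (Set.Ioo ((20:ℝ)/21) 1) := by
    apply strictMonoOn_of_deriv_pos (convex_Ioo _ _)
    · intro x hx
      have hx0 : (0:ℝ) < x := lt_trans (by norm_num) hx.1
      exact (hasDerivAt_F hx0 hx.2).differentiableAt.continuousAt.continuousWithinAt
    · intro x hx
      rw [interior_Ioo] at hx
      have hx0 : (0:ℝ) < x := lt_trans (by norm_num) hx.1
      rw [(hasDerivAt_F hx0 hx.2).deriv]
      exact F'_pos hx.1 hx.2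
  intro x hx y hy hxy
  have hx0 : (0:ℝ) < x := lt_trans (by norm_num) hx.1
  have hy0 : (0:ℝ) < y := lt_trans (by norm_num) hy.1
  rw [g_eq hx0 hx.2, g_eq hy0 hy.2]
  exact (div_lt_div_iff_of_pos_right hlog2).mpr (hmono hx hy hxy)
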